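/- For every integer k ≥ 2, the finite trigonometric sum Σ_{j=1}^{k-1} 1/sin²(jπ/k) equals (k² - 1)/3. -/

import Mathlib

open Finset Complex

lemma auxA (n : ℕ) (z : ℂ) :
    (z - 1)^2 * ∑ i ∈ range n, ((i:ℂ)+1) * z^i
      = n * z^(n+1) - (n+1) * z^n + 1 := by
  induction n with
  | zero => simp
  | succ n ih =>
    rw [Finset.sum_range_succ, mul_add, ih]
    push_cast
    ring

lemma auxB (n : ℕ) (z : ℂ) :
    (z - 1)^3 * ∑ i ∈ range n, ((i:ℂ)+1)^2 * z^i
      = (n:ℂ)^2 * z^(n+2) - (2*(n:ℂ)^2 + 2*n - 1) * z^(n+1) + ((n:ℂ)+1)^2 * z^n - z - 1 := by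
  induction n with
  | zero => simp
  | succ n ih =>
    rw [Finset.sum_range_succ, mul_add, ih]
    push_cast
    ring

lemma key (k : ℕ) (z : ℂ) (h1 : z^k = 1) (hz : z ≠ 1) :
    (z - 1)^2 * ∑ i ∈ range k, ((i:ℂ)+1) * ((k:ℂ) - i - 1) * z^i = 2 * k := by
  have hz1 : z - 1 ≠ 0 := sub_ne_zero.mpr hz
  apply mul_left_cancel₀ hz1
  have hQ : ∑ i ∈ range k, ((i:ℂ)+1) * ((k:ℂ) - i - 1) * z^i
      = (k:ℂ) * ∑ i ∈ range k, ((i:ℂ)+1) * z^i - ∑ i ∈ range k, ((i:ℂ)+1)^2 * z^i := by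
    rw [Finset.mul_sum, ← Finset.sum_sub_distrib]
    exact Finset.sum_congr rfl fun i _ => by ring
  have hA := auxA k z
  have hB := auxB k z
  have hzk1 : z^(k+1) = z := by rw [pow_succ, h1, one_mul]
  have hzk2 : z^(k+2) = z^2 := by rw [pow_add, h1, one_mul]
  calc (z-1) * ((z-1)^2 * ∑ i ∈ range k, ((i:ℂ)+1) * ((k:ℂ) - i - 1) * z^i)
      = (k:ℂ) * ((z-1) * ((z-1)^2 * ∑ i ∈ range k, ((i:ℂ)+1) * z^i))
        - (z-1)^3 * ∑ i ∈ range k, ((i:ℂ)+1)^2 * z^i := by rw [hQ]; ring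
    _ = (z-1) * (2*k) := by rw [hA, hB, h1, hzk1, hzk2]; ring

lemma sinsq (θ : ℝ) :
    4 * (Complex.sin θ)^2 * Complex.exp (2*θ*Complex.I)
      = -(Complex.exp (2*θ*Complex.I) - 1)^2 := by
  rw [Complex.sin]
  have h1 : Complex.exp (↑θ*Complex.I) * Complex.exp (-↑θ*Complex.I) = 1 := by
    rw [← Complex.exp_add]; ring_nf; exact Complex.exp_zero
  have h2 : Complex.exp (2*↑θ*Complex.I) = Complex.exp (↑θ*Complex.I) * Complex.exp (↑θ*Complex.I) := by
    rw [← Complex.exp_add]; ring_nf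
  rw [h2]
  set a := Complex.exp (↑θ*Complex.I)
  set b := Complex.exp (-↑θ*Complex.I)
  linear_combination ((b - a)^2 * a^2) * Complex.I_sq + (2*a^2 - 1 - a*b) * h1

lemma expne (r : ℝ) (h0 : 0 < r) (h1 : r < 2 * Real.pi) :
    Complex.exp (↑r * Complex.I) ≠ 1 := by
  intro h
  rw [Complex.exp_eq_one_iff] at h
  obtain ⟨n, hn⟩ := h
  have hI : (↑r : ℂ) = ↑n * (2 * ↑Real.pi) := by
    refine mul_right_cancel₀ Complex.I_ne_zero ?_
    rw [hn]; ring
  have hr : r = n * (2 * Real.pi) := by exact_mod_cast hI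
  have hπ := Real.pi_pos
  rcases le_or_gt n 0 with h | h
  · have hn0 : (n:ℝ) ≤ 0 := by exact_mod_cast h
    nlinarith
  · have : (1:ℝ) ≤ n := by exact_mod_cast h
    nlinarith

lemma geo (k : ℕ) (hk : 1 ≤ k) (w : ℂ) (hw : w^k = 1) (hne : w ≠ 1) :
    ∑ j ∈ Ico 1 k, w^j = -1 := by
  have h0 : ∑ j ∈ Ico 0 1, w^j + ∑ j ∈ Ico 1 k, w^j = ∑ j ∈ Ico 0 k, w^j :=
    Finset.sum_Ico_consecutive _ (by omega) (by omega)
  have hg : ∑ j ∈ Ico 0 k, w^j = 0 := by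
    rw [← Finset.range_eq_Ico, geom_sum_eq hne, hw]
    simp
  have h1 : ∑ j ∈ Ico 0 1, w^j = 1 := by simp
  rw [h1, hg] at h0
  linear_combination h0

lemma sumlin (n : ℕ) : ∑ i ∈ range n, ((i:ℂ)+1) = n*(n+1)/2 := by
  induction n with
  | zero => simp
  | succ n ih => rw [Finset.sum_range_succ, ih]; push_cast; ring

lemma sumc (k : ℕ) : ∑ i ∈ range k, ((i:ℂ)+1) * ((k:ℂ) - i - 1) = k*((k:ℂ)^2-1)/6 := by
  induction k with
  | zero => simp
  | succ k ih =>
    have split : ∑ i ∈ range (k+1), ((i:ℂ)+1) * (((k:ℕ)+1:ℂ) - i - 1)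
        = (∑ i ∈ range k, ((i:ℂ)+1) * ((k:ℂ) - i - 1) + ((k:ℂ)+1) * ((k:ℂ) - k - 1))
          + ∑ i ∈ range (k+1), ((i:ℂ)+1) := by
      rw [← Finset.sum_range_succ, ← Finset.sum_add_distrib]
      exact Finset.sum_congr rfl fun i _ => by ring
    push_cast at split ⊢
    rw [split, ih, sumlin]
    push_cast
    ring

lemma perj (k j : ℕ) (hk : 2 ≤ k) (hj1 : 1 ≤ j) (hjk : j < k) :
    1 / Complex.sin ((j:ℂ) * (Real.pi:ℂ) / (k:ℂ))^2
      = ∑ i ∈ Finset.range k, (((i:ℂ)+1) * ((k:ℂ) - (i:ℂ) - 1) * (-2/(k:ℂ)))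
          * Complex.exp (((2 * Real.pi * ((i:ℝ)+1) / (k:ℝ) : ℝ) : ℂ) * Complex.I)^j := by
  have hπ := Real.pi_pos
  have hkR : (0:ℝ) < k := by exact_mod_cast (by omega : 0 < k)
  have hkC : (k:ℂ) ≠ 0 := by exact_mod_cast (by omega : k ≠ 0)
  set θ : ℝ := (j:ℝ) * Real.pi / k with hθ
  have hθpos : 0 < θ := by
    apply div_pos (mul_pos (by exact_mod_cast hj1) hπ) hkR
  have hθlt : θ < Real.pi := by
    rw [hθ, div_lt_iff₀ hkR]
    have : (j:ℝ) < k := by exact_mod_cast hjk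
    nlinarith
  -- identify the complex sine
  have hcast : ((θ:ℝ):ℂ) = (j:ℂ) * (Real.pi:ℂ) / (k:ℂ) := by push_cast [hθ]; ring
  set z : ℂ := Complex.exp (2*(θ:ℂ)*Complex.I) with hz
  have hz0 : z ≠ 0 := Complex.exp_ne_zero _
  have hzk : z^k = 1 := by
    rw [hz, ← Complex.exp_nat_mul]
    have harg : (k:ℂ) * (2*(θ:ℂ)*Complex.I) = (j:ℤ) * (2*(Real.pi:ℂ)*Complex.I) := by
      push_cast [hθ]
      field_simp
    rw [harg, Complex.exp_int_mul_two_pi_mul_I]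
  have hzne : z ≠ 1 := by
    have : (2*(θ:ℂ)*Complex.I) = ((2*θ : ℝ) : ℂ) * Complex.I := by push_cast; ring
    rw [hz, this]
    exact expne (2*θ) (by linarith) (by linarith)
  have hS : Complex.sin (θ:ℂ) ≠ 0 := by
    rw [← Complex.ofReal_sin]
    simp only [ne_eq, Complex.ofReal_eq_zero]
    exact ne_of_gt (Real.sin_pos_of_pos_of_lt_pi hθpos hθlt)
  have hkey := key k z hzk hzne
  have hsin := sinsq θ
  rw [← hz] at hsin
  set S := Complex.sin (θ:ℂ) with hSdef
  set Q := ∑ i ∈ range k, ((i:ℂ)+1) * ((k:ℂ) - i - 1) * z^i with hQdef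
  have hmain : (k:ℂ) = (-2) * z * Q * S^2 := by
    linear_combination (-(1:ℂ)/2) * hkey + (Q/2) * hsin
  -- rewrite RHS sum as (-2/k) * z * Q
  have hterm : ∀ i ∈ range k,
      (((i:ℂ)+1) * ((k:ℂ) - (i:ℂ) - 1) * (-2/(k:ℂ)))
          * Complex.exp (((2 * Real.pi * ((i:ℝ)+1) / (k:ℝ) : ℝ) : ℂ) * Complex.I)^j
        = (((i:ℂ)+1) * ((k:ℂ) - i - 1) * z^i) * ((-2/(k:ℂ)) * z) := by
    intro i _
    have hpow : Complex.exp (((2 * Real.pi * ((i:ℝ)+1) / (k:ℝ) : ℝ) : ℂ) * Complex.I)^j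
        = z^(i+1) := by
      rw [hz, ← Complex.exp_nat_mul, ← Complex.exp_nat_mul]
      congr 1
      push_cast [hθ]
      field_simp
    rw [hpow, pow_succ]
    ring
  rw [Finset.sum_congr rfl hterm, ← Finset.sum_mul, ← hQdef, ← hcast, ← hSdef]
  rw [div_eq_iff (pow_ne_zero 2 hS)]
  field_simp
  linear_combination hmain

/-- For every integer `k ≥ 2`, `∑_{j=1}^{k-1} 1/sin²(jπ/k) = (k² - 1)/3`. -/
theorem sum_inv_sin_sq (k : ℕ) (hk : 2 ≤ k) :
    ∑ j ∈ Finset.Ico 1 k, 1 / Real.sin ((j : ℝ) * Real.pi / k) ^ 2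
      = ((k : ℝ) ^ 2 - 1) / 3 := by
  have hπ := Real.pi_pos
  have hkC : (k:ℂ) ≠ 0 := by exact_mod_cast (by omega : k ≠ 0)
  apply Complex.ofReal_injective
  push_cast
  rw [Finset.sum_congr rfl
    (fun j hj => perj k j hk (Finset.mem_Ico.mp hj).1 (Finset.mem_Ico.mp hj).2)]
  rw [Finset.sum_comm]
  have hswap : ∀ i ∈ Finset.range k,
      ∑ j ∈ Finset.Ico 1 k, (((i:ℂ)+1) * ((k:ℂ) - (i:ℂ) - 1) * (-2/(k:ℂ)))
          * Complex.exp (((2 * Real.pi * ((i:ℝ)+1) / (k:ℝ) : ℝ) : ℂ) * Complex.I)^j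
        = (((i:ℂ)+1) * ((k:ℂ) - (i:ℂ) - 1) * (-2/(k:ℂ)))
          * ∑ j ∈ Finset.Ico 1 k,
              Complex.exp (((2 * Real.pi * ((i:ℝ)+1) / (k:ℝ) : ℝ) : ℂ) * Complex.I)^j :=
    fun i _ => by rw [Finset.mul_sum]
  rw [Finset.sum_congr rfl hswap]
  have hgeo : ∀ i ∈ Finset.range (k-1),
      ∑ j ∈ Finset.Ico 1 k,
          Complex.exp (((2 * Real.pi * ((i:ℝ)+1) / (k:ℝ) : ℝ) : ℂ) * Complex.I)^j = -1 := by
    intro i hi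
    have hi' : i < k - 1 := Finset.mem_range.mp hi
    apply geo k (by omega)
    · rw [← Complex.exp_nat_mul]
      have harg : (k:ℂ) * ((((2 * Real.pi * ((i:ℝ)+1) / (k:ℝ) : ℝ)) : ℂ) * Complex.I)
          = ((i+1 : ℤ)) * (2*(Real.pi:ℂ)*Complex.I) := by
        push_cast
        field_simp
      rw [harg, Complex.exp_int_mul_two_pi_mul_I]
    · apply expne
      · positivity
      · rw [div_lt_iff₀ (by exact_mod_cast (by omega : 0 < k))]
        have : (i:ℝ) + 1 < k := by
          have : (i:ℝ) < (k:ℝ) - 1 := by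
            have hk1 : ((k-1:ℕ):ℝ) = (k:ℝ) - 1 := by
              push_cast [Nat.cast_sub (by omega : 1 ≤ k)]; ring
            rw [← hk1]; exact_mod_cast hi'
          linarith
        nlinarith
  obtain ⟨m, rfl⟩ : ∃ m, k = m + 1 := ⟨k - 1, by omega⟩
  rw [Finset.sum_range_succ]
  have hlast : (((m:ℂ)+1) * (((m+1:ℕ):ℂ) - (m:ℂ) - 1) * (-2/((m+1:ℕ):ℂ))) = 0 := by
    push_cast; ring
  rw [hlast, zero_mul, add_zero]
  have hsimp : ∀ i ∈ Finset.range m,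
      (((i:ℂ)+1) * (((m+1:ℕ):ℂ) - (i:ℂ) - 1) * (-2/((m+1:ℕ):ℂ)))
          * ∑ j ∈ Finset.Ico 1 (m+1),
              Complex.exp (((2 * Real.pi * ((i:ℝ)+1) / ((m+1:ℕ):ℝ) : ℝ) : ℂ) * Complex.I)^j
        = (((i:ℂ)+1) * (((m+1:ℕ):ℂ) - (i:ℂ) - 1)) * (2/((m+1:ℕ):ℂ)) := by
    intro i hi
    rw [hgeo i (by simpa using hi)]
    ring
  rw [Finset.sum_congr rfl hsimp, ← Finset.sum_mul]
  have hsum : ∑ i ∈ Finset.range m, ((i:ℂ)+1) * (((m+1:ℕ):ℂ) - (i:ℂ) - 1)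
      = ((m+1:ℕ):ℂ)*(((m+1:ℕ):ℂ)^2-1)/6 := by
    have h2 := sumc (m+1)
    rw [Finset.sum_range_succ] at h2
    have h0 : ((m:ℂ)+1) * (((m+1:ℕ):ℂ) - (m:ℂ) - 1) = 0 := by push_cast; ring
    rw [h0, add_zero] at h2
    exact h2
  rw [hsum]
  have hmC : ((m:ℂ)+1) ≠ 0 := by
    have := hkC; push_cast at this; exact this
  push_cast
  field_simp
  ring
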